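/- Let X = |P_1,…,P_{n+1}| be an n-dimensional simplex whose vertices P_1,…,P_{n+1} lie in general position in (ℝ_{≥0})^n. If ℝ^I and ℝ^J are both full-supporting coordinate subspaces for X, then ℝ^{I∩J} is also a full-supporting coordinate subspace for X. Consequently, there exists a unique minimal full-supporting coordinate subspace ℝ^{I_0} for X (i.e., ℝ^{I_0} is full-supporting and I_0 ⊆ I for every full-supporting ℝ^I). -/

import Mathlib

open MeasureTheory

/-- The nonnegative orthant in `ℝ^n`. -/
def orthant (n : ℕ) : Set (Fin n → ℝ) := {x | ∀ i, 0 ≤ x i}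

/-- The coordinate subspace `ℝ^I = {x : x_i = 0 for i ∉ I}`. -/
def coordSub {n : ℕ} (I : Finset (Fin n)) : Set (Fin n → ℝ) := {x | ∀ i ∉ I, x i = 0}

/-- The projection `π_I` setting the coordinates indexed by `I` to zero. -/
def coordProj {n : ℕ} (I : Finset (Fin n)) (x : Fin n → ℝ) : Fin n → ℝ :=
  fun i => if i ∈ I then 0 else x i

/-- `|I|`-dimensional Lebesgue volume of `X ∩ ℝ^I` computed inside `ℝ^I`. -/
noncomputable def coordVol {n : ℕ} (I : Finset (Fin n)) (X : Set (Fin n → ℝ)) : ℝ :=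
  (volume ((fun (y : I → ℝ) => (fun i => if h : i ∈ I then y ⟨i, h⟩ else 0 : Fin n → ℝ)) ⁻¹' X)).toReal

/-- The Newton number of `X` computed relative to the coordinate set `K`
(for the ambient space `ℝ^K`); taking `K = univ` gives the usual Newton number. -/
noncomputable def newtonNumberOn {n : ℕ} (K : Finset (Fin n)) (X : Set (Fin n → ℝ)) : ℝ :=
  ∑ I ∈ K.powerset, (-1 : ℝ) ^ (K.card - I.card) * (Nat.factorial I.card : ℝ) * coordVol I X

/-- `ℝ^I` is a full-supporting coordinate subspace for the simplex with vertices `P`: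
it contains exactly `|I| + 1` of the vertices. -/
def FullSupp {n : ℕ} (P : Fin (n+1) → (Fin n → ℝ)) (I : Finset (Fin n)) : Prop :=
  Nat.card {j : Fin (n+1) // P j ∈ coordSub I} = I.card + 1

/-- A compact polyhedron: finite union of compact convex polytopes. -/
def IsCompactPolyhedron {n : ℕ} (X : Set (Fin n → ℝ)) : Prop :=
  ∃ (k : ℕ) (F : Fin k → Finset (Fin n → ℝ)),
    X = ⋃ i, convexHull ℝ (↑(F i) : Set (Fin n → ℝ))

/-- A pure `n`-dimensional compact polyhedron in `ℝ^n`: finite union of `n`-dimensional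
compact convex polytopes. -/
def IsPureCompactPolyhedron {n : ℕ} (X : Set (Fin n → ℝ)) : Prop :=
  ∃ (k : ℕ) (F : Fin k → Finset (Fin n → ℝ)),
    X = (⋃ i, convexHull ℝ (↑(F i) : Set (Fin n → ℝ))) ∧
    ∀ i, affineSpan ℝ (↑(F i) : Set (Fin n → ℝ)) = ⊤

/-- A quasi-convenient polyhedron in the nonnegative orthant. -/
def QuasiConvenient {n : ℕ} (X : Set (Fin n → ℝ)) : Prop :=
  IsCompactPolyhedron X ∧ X ⊆ orthant n ∧ (0 : Fin n → ℝ) ∈ X ∧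
  (∀ P ∈ Set.extremePoints ℝ X, ∀ i, P i ≠ 0 → 1 ≤ P i) ∧
  ∀ I : Finset (Fin n),
    Nonempty ((X ∩ coordSub I : Set (Fin n → ℝ)) ≃ₜ
      (Metric.closedBall (0 : EuclideanSpace ℝ (Fin I.card)) 1))

/-- `F^l_k(d_1,…,d_k) = Σ_{i_1+⋯+i_k=l-k} d_1^{i_1+1}⋯d_k^{i_k+1}`, where `d j`
denotes `d_j` for `1 ≤ j ≤ k`. -/
def Fpoly (k l : ℕ) (d : ℕ → ℕ) : ℕ :=
  ∑ c ∈ Finset.Nat.antidiagonalTuple k (l - k), ∏ j : Fin k, d (j.val + 1) ^ (c j + 1)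

/-- `G^l_k(d_1,…,d_k) = Σ_{i_1+⋯+i_k=l-k} d_1^{i_1}⋯d_k^{i_k}`. -/
def Gpoly (k l : ℕ) (d : ℕ → ℕ) : ℕ :=
  ∑ c ∈ Finset.Nat.antidiagonalTuple k (l - k), ∏ j : Fin k, d (j.val + 1) ^ (c j)

open Classical in
/-- The `r`-th Newton number of `(d_1,…,d_r)`-type, relative to the coordinate set `K`. -/
noncomputable def rNewtonOn {n : ℕ} (K : Finset (Fin n)) (r : ℕ) (d : ℕ → ℕ)
    (X : Set (Fin n → ℝ)) : ℝ :=
  (∑ I ∈ K.powerset.filter (fun I => r ≤ I.card),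
      (-1 : ℝ) ^ (K.card - I.card) * (Fpoly r I.card d : ℝ) *
        (Nat.factorial I.card : ℝ) * coordVol I X)
  + (if (0 : Fin n → ℝ) ∈ X then 1 else 0) * (-1 : ℝ) ^ (K.card - r + 1)


open Classical in
lemma fullSupp_iff_filter {n : ℕ} (P : Fin (n+1) → (Fin n → ℝ)) (I : Finset (Fin n))
    [DecidablePred (fun j => P j ∈ coordSub I)] :
    FullSupp P I ↔
      (Finset.univ.filter (fun j => P j ∈ coordSub I)).card = I.card + 1 := by
  rw [FullSupp, Nat.card_eq_fintype_card, Fintype.card_subtype]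

lemma coordSub_mono {n : ℕ} {I J : Finset (Fin n)} (h : I ⊆ J) :
    coordSub I ⊆ coordSub J := by
  intro x hx i hi
  exact hx i (fun hiI => hi (h hiI))

lemma coordSub_inter {n : ℕ} (I J : Finset (Fin n)) :
    coordSub (I ∩ J) = coordSub I ∩ coordSub J := by
  ext x
  simp only [coordSub, Set.mem_setOf_eq, Set.mem_inter_iff, Finset.mem_inter, not_and_or]
  constructor
  · intro h
    exact ⟨fun i hi => h i (Or.inl hi), fun i hi => h i (Or.inr hi)⟩
  · rintro ⟨h1, h2⟩ i (hi | hi)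
    · exact h1 i hi
    · exact h2 i hi

/-- The coordinate subspace as a submodule. -/
def coordSubmodule {n : ℕ} (I : Finset (Fin n)) : Submodule ℝ (Fin n → ℝ) where
  carrier := coordSub I
  add_mem' := by
    intro a b ha hb i hi
    simp [ha i hi, hb i hi]
  zero_mem' := by
    intro i hi
    rfl
  smul_mem' := by
    intro c x hx i hi
    simp [hx i hi]

open Classical in
lemma cardBound {n : ℕ} (P : Fin (n+1) → (Fin n → ℝ)) (hind : AffineIndependent ℝ P)
    (I : Finset (Fin n)) (S : Finset (Fin (n+1))) (hS : ∀ j ∈ S, P j ∈ coordSub I) :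
    S.card ≤ I.card + 1 := by
  rcases S.eq_empty_or_nonempty with rfl | hne
  · simp
  have hcard : Fintype.card S = (S.card - 1) + 1 := by
    rw [Fintype.card_coe]
    have := Finset.card_pos.2 hne
    omega
  have hindS : AffineIndependent ℝ (fun j : S => P j) :=
    hind.comp_embedding (Function.Embedding.subtype _)
  have hfr : Module.finrank ℝ (vectorSpan ℝ (Set.range fun j : S => P j)) = S.card - 1 :=
    hindS.finrank_vectorSpan hcard
  have hsub : vectorSpan ℝ (Set.range fun j : S => P j) ≤ coordSubmodule I := by
    rw [vectorSpan, Submodule.span_le]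
    rintro x ⟨a, ⟨j, rfl⟩, b, ⟨k, rfl⟩, rfl⟩
    exact (coordSubmodule I).sub_mem (hS j j.2) (hS k k.2)
  -- finrank of coordSubmodule I is at most I.card
  have hinj : Function.Injective
      ((LinearMap.funLeft ℝ ℝ (Subtype.val : I → Fin n)).comp
        (coordSubmodule I).subtype) := by
    intro x y hxy
    ext i
    by_cases hi : i ∈ I
    · exact congrFun hxy ⟨i, hi⟩
    · rw [x.2 i hi, y.2 i hi]
  have h2 : Module.finrank ℝ (coordSubmodule I) ≤ I.card := by
    have := LinearMap.finrank_le_finrank_of_injective hinj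
    simpa [Module.finrank_pi, Fintype.card_coe] using this
  have h3 : Module.finrank ℝ (vectorSpan ℝ (Set.range fun j : S => P j)) ≤
      Module.finrank ℝ (coordSubmodule I) := Submodule.finrank_mono hsub
  have h4 : S.card - 1 ≤ I.card := by
    rw [← hfr]
    exact le_trans h3 h2
  omega

open Classical in
lemma fullSupp_univ {n : ℕ} (P : Fin (n+1) → (Fin n → ℝ)) :
    FullSupp P (Finset.univ : Finset (Fin n)) := by
  rw [fullSupp_iff_filter]
  have : ∀ j : Fin (n+1), P j ∈ coordSub (Finset.univ : Finset (Fin n)) := by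
    intro j i hi
    exact absurd (Finset.mem_univ i) hi
  simp [Finset.filter_true_of_mem (fun j _ => this j)]

theorem stmt0 (n : ℕ) (P : Fin (n + 1) → (Fin n → ℝ))
    (hind : AffineIndependent ℝ P) (hpos : ∀ j i, 0 ≤ P j i) :
    (∀ I J : Finset (Fin n), FullSupp P I → FullSupp P J → FullSupp P (I ∩ J)) ∧
    (∃! I₀ : Finset (Fin n), FullSupp P I₀ ∧ ∀ I, FullSupp P I → I₀ ⊆ I) := by
  classical
  have key : ∀ I J : Finset (Fin n), FullSupp P I → FullSupp P J → FullSupp P (I ∩ J) := by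
    intro I J hI hJ
    have hII := (fullSupp_iff_filter P I).1 hI
    have hJJ := (fullSupp_iff_filter P J).1 hJ
    have h1 : (Finset.univ.filter (fun j => P j ∈ coordSub I)) ∩
        (Finset.univ.filter (fun j => P j ∈ coordSub J)) =
        Finset.univ.filter (fun j => P j ∈ coordSub (I ∩ J)) := by
      ext j
      simp only [Finset.mem_inter, Finset.mem_filter, Finset.mem_univ, true_and,
        coordSub_inter, Set.mem_inter_iff]
    set f := fun (K : Finset (Fin n)) =>
      Finset.univ.filter (fun j => P j ∈ coordSub K) with hf
    have h2 : f I ∪ f J ⊆ f (I ∪ J) := by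
      intro j hj
      rcases Finset.mem_union.1 hj with hj | hj
      · exact Finset.mem_filter.2 ⟨Finset.mem_univ _,
          coordSub_mono Finset.subset_union_left (Finset.mem_filter.1 hj).2⟩
      · exact Finset.mem_filter.2 ⟨Finset.mem_univ _,
          coordSub_mono Finset.subset_union_right (Finset.mem_filter.1 hj).2⟩
    have h3 : (f (I ∪ J)).card ≤ (I ∪ J).card + 1 :=
      cardBound P hind _ _ (fun j hj => (Finset.mem_filter.1 hj).2)
    have h4 : (f (I ∩ J)).card ≤ (I ∩ J).card + 1 :=
      cardBound P hind _ _ (fun j hj => (Finset.mem_filter.1 hj).2)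
    have h5 : (f I ∪ f J).card + (f I ∩ f J).card = (f I).card + (f J).card :=
      Finset.card_union_add_card_inter _ _
    have h6 : (f I ∪ f J).card ≤ (f (I ∪ J)).card := Finset.card_le_card h2
    have h7 : (I ∪ J).card + (I ∩ J).card = I.card + J.card :=
      Finset.card_union_add_card_inter I J
    have h1c : (f I ∩ f J).card = (f (I ∩ J)).card := by rw [hf]; rw [h1]
    have gI : (f I).card = I.card + 1 := hII
    have gJ : (f J).card = J.card + 1 := hJJ
    have g4 : (f (I ∩ J)).card ≤ (I ∩ J).card + 1 := h4
    rw [fullSupp_iff_filter]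
    show (f (I ∩ J)).card = (I ∩ J).card + 1
    omega
  refine ⟨key, ?_⟩
  set T : Finset (Finset (Fin n)) := Finset.univ.filter (FullSupp P) with hT
  have hTne : T.Nonempty := ⟨Finset.univ, by simp [hT, fullSupp_univ P]⟩
  have hTmem : ∀ I, I ∈ T ↔ FullSupp P I := by
    intro I; simp [hT]
  have hinf : ∀ (T' : Finset (Finset (Fin n))) (h : T'.Nonempty),
      (∀ I ∈ T', FullSupp P I) → FullSupp P (T'.inf' h id) := by
    intro T' h
    induction h using Finset.Nonempty.cons_induction with
    | singleton a =>
      intro ha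
      simp only [Finset.inf'_singleton, id]
      exact ha a (Finset.mem_singleton_self a)
    | cons a s ha hs ih =>
      intro hall
      rw [Finset.inf'_cons hs]
      have h1 : FullSupp P a := hall a (Finset.mem_cons_self a s)
      have h2 : FullSupp P (s.inf' hs id) :=
        ih (fun I hI => hall I (Finset.mem_cons_of_mem hI))
      exact key a _ h1 h2
  refine ⟨T.inf' hTne id, ⟨hinf T hTne (fun I hI => (hTmem I).1 hI), ?_⟩, ?_⟩
  · intro I hI
    exact Finset.inf'_le id ((hTmem I).2 hI)
  · rintro I₁ ⟨h1, h2⟩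
    refine Finset.Subset.antisymm ?_ ?_
    · exact h2 _ (hinf T hTne (fun I hI => (hTmem I).1 hI))
    · exact Finset.inf'_le id ((hTmem I₁).2 h1)
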